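/- The run-length-coded sequence α built from θ is a Morse-type minimal point: the orbit closure closure {σ^[k] α | k : ℕ} ⊆ (ℕ → Bool) is minimal (every nonempty closed shift-invariant subset of it equals it) and uncountable. Here α : ℕ → Bool is defined as follows: let s : ℕ → ℕ satisfy s 0 = 0 and s (n+1) = s n + θ n + 2, and set α m = false if there exists n with m + 1 = s (n+1), and α m = true otherwise (so α is the concatenation, over n, of a run of (θ n + 1) ones followed by a single zero; α = 101101110101101011101101110101110 11⋯). -/

import Mathlib

/-- The Thue–Morse sequence: `t n = true` iff the number of 1s in the
binary expansion of `n` is odd. -/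
def thueMorse (n : ℕ) : Bool := (Nat.digits 2 n).count 1 % 2 == 1

/-- The sequence `θ` obtained from the Thue–Morse sequence by replacing
the second digit of each factor 00 or 11 by 2. -/
def theta : ℕ → ℕ
  | 0 => if thueMorse 0 then 1 else 0
  | (n + 1) =>
      if thueMorse n = thueMorse (n + 1) then 2
      else (if thueMorse (n + 1) then 1 else 0)

/-- Partial sums marking the positions of the 0s in the run-length coding:
`s (n+1) = s n + θ n + 2`. -/
def runPos : ℕ → ℕ
  | 0 => 0
  | (n + 1) => runPos n + theta n + 2

open Classical in
/-- The run-length-coded sequence `α` built from `θ`: the concatenation, over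
`n`, of a run of `θ n + 1` ones followed by a single zero. -/
noncomputable def alpha (m : ℕ) : Bool :=
  if ∃ n : ℕ, m + 1 = runPos (n + 1) then false else true

/-- The shift map on the one-sided binary full shift. -/
def shift (x : ℕ → Bool) : ℕ → Bool := fun n => x (n + 1)

def pop (n : ℕ) : ℕ := (Nat.digits 2 n).count 1

lemma pop_two_mul (n : ℕ) : pop (2 * n) = pop n := by
  rcases Nat.eq_zero_or_pos n with h | h
  · simp [h]
  · unfold pop
    rw [Nat.digits_def' (by norm_num : 1 < 2) (by omega)]
    have h1 : (2 * n) % 2 = 0 := by omega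
    have h2 : (2 * n) / 2 = n := by omega
    rw [h1, h2, List.count_cons]
    simp

lemma pop_two_mul_add_one (n : ℕ) : pop (2 * n + 1) = pop n + 1 := by
  unfold pop
  rw [Nat.digits_def' (by norm_num : 1 < 2) (by omega)]
  have h1 : (2 * n + 1) % 2 = 1 := by omega
  have h2 : (2 * n + 1) / 2 = n := by omega
  rw [h1, h2, List.count_cons]
  simp

lemma pop_div2 (i : ℕ) : pop i = pop (i / 2) + i % 2 := by
  rcases Nat.mod_two_eq_zero_or_one i with h | h
  · have : i = 2 * (i / 2) := by omega
    rw [h, this, pop_two_mul]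
    simp [Nat.mul_div_cancel_left]
  · have hh : i = 2 * (i / 2) + 1 := by omega
    calc pop i = pop (2 * (i / 2) + 1) := by rw [← hh]
    _ = pop (i / 2) + i % 2 := by rw [pop_two_mul_add_one, h]

lemma tm_eq (n : ℕ) : thueMorse n = (pop n % 2 == 1) := rfl

lemma tm_two_mul (n : ℕ) : thueMorse (2 * n) = thueMorse n := by
  simp [tm_eq, pop_two_mul]

lemma tm_two_mul_add_one (n : ℕ) : thueMorse (2 * n + 1) = !thueMorse n := by
  simp only [tm_eq, pop_two_mul_add_one]
  rcases Nat.mod_two_eq_zero_or_one (pop n) with h | h <;>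
    simp [Nat.add_mod, h]

lemma pop_add_pow (k m i : ℕ) (hi : i < 2 ^ k) :
    pop (2 ^ k * m + i) = pop m + pop i := by
  induction k generalizing i with
  | zero => interval_cases i; simp [pop]
  | succ k ih =>
    have hi2 : i / 2 < 2 ^ k := by omega
    have h := ih (i / 2) hi2
    have hsplit : 2 ^ (k+1) * m + i = 2 * (2 ^ k * m + i / 2) + i % 2 := by
      have : 2 ^ (k+1) * m = 2 * (2 ^ k * m) := by ring
      omega
    rcases Nat.mod_two_eq_zero_or_one i with h0 | h0
    · rw [h0] at hsplit
      rw [hsplit, Nat.add_zero, pop_two_mul, h, pop_div2 i, h0]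
      omega
    · rw [h0] at hsplit
      rw [hsplit, pop_two_mul_add_one, h, pop_div2 i, h0]
      omega

lemma tm_block (k m i : ℕ) (hi : i < 2 ^ k) :
    thueMorse (2 ^ k * m + i) = xor (thueMorse m) (thueMorse i) := by
  simp only [tm_eq, pop_add_pow k m i hi]
  rcases Nat.mod_two_eq_zero_or_one (pop m) with h1 | h1 <;>
  rcases Nat.mod_two_eq_zero_or_one (pop i) with h2 | h2 <;>
    simp [Nat.add_mod, h1, h2]

lemma pop_pow_sub_one (k : ℕ) : pop (2 ^ k - 1) = k := by
  induction k with
  | zero => simp [pop]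
  | succ k ih =>
    have h : 2 ^ (k+1) - 1 = 2 * (2 ^ k - 1) + 1 := by
      have : 1 ≤ 2 ^ k := Nat.one_le_two_pow
      omega
    rw [h, pop_two_mul_add_one, ih]

lemma tm0 : thueMorse 0 = false := by norm_num [thueMorse]
lemma tm1 : thueMorse 1 = true := by norm_num [thueMorse, Nat.digits_def']
lemma tm2 : thueMorse 2 = true := by norm_num [thueMorse, Nat.digits_def']
lemma tm3 : thueMorse 3 = false := by norm_num [thueMorse, Nat.digits_def']


lemma tm_period_iter (p K : ℕ) (h : ∀ n, K ≤ n → thueMorse (n + p) = thueMorse n) :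
    ∀ s n, K ≤ n → thueMorse (n + s * p) = thueMorse n := by
  intro s
  induction s with
  | zero => simp
  | succ s ih =>
    intro n hn
    have h1 : n + (s + 1) * p = (n + s * p) + p := by ring
    rw [h1, h (n + s * p) (by omega), ih n hn]

lemma tm_not_eventually_periodic (p K : ℕ) (hp : 1 ≤ p)
    (h : ∀ n, K ≤ n → thueMorse (n + p) = thueMorse n) : False := by
  induction p using Nat.strong_induction_on generalizing K with
  | _ p ih =>
    rcases Nat.even_or_odd p with ⟨m, hm⟩ | ⟨m, hm⟩
    · -- p = 2m, halve the period
      have hm1 : 1 ≤ m := by omega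
      refine ih m (by omega) K hm1 ?_
      intro n hn
      have h2 : thueMorse (2 * n + p) = thueMorse (2 * n) := h (2 * n) (by omega)
      have h3 : 2 * n + p = 2 * (n + m) := by omega
      rw [h3, tm_two_mul, tm_two_mul] at h2
      exact h2
    · -- p = 2m+1 odd : choose n ≡ -1 mod p, n ≥ K
      set n := (K + 1) * p - 1 with hn
      have hkp : K + 1 ≤ (K + 1) * p := Nat.le_mul_of_pos_right _ hp
      have hnK : K ≤ n := by omega
      have hdiv : n + 1 = (K + 1) * p := by omega
      have h2 : (2 * n + 1) = n + (K + 1) * p := by omega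
      have h3 : thueMorse (2 * n + 1) = thueMorse n := by
        rw [h2]
        exact tm_period_iter p K h (K + 1) n hnK
      rw [tm_two_mul_add_one] at h3
      simp at h3


lemma theta_succ (n : ℕ) : theta (n + 1) =
    if thueMorse n = thueMorse (n + 1) then 2
    else (if thueMorse (n + 1) then 1 else 0) := rfl

lemma theta_zero : theta 0 = 0 := by simp [theta, tm0]

lemma theta_le_two (n : ℕ) : theta n ≤ 2 := by
  cases n with
  | zero => rw [theta_zero]; omega
  | succ n => rw [theta_succ]; split <;> [omega; split <;> omega]

lemma runPos_succ (n : ℕ) : runPos (n + 1) = runPos n + theta n + 2 := rfl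

lemma runPos_strictMono : StrictMono runPos :=
  strictMono_nat_of_lt_succ (fun n => by rw [runPos_succ]; omega)

lemma runPos_le (n : ℕ) : runPos n ≤ 4 * n := by
  induction n with
  | zero => simp [runPos]
  | succ n ih => have := theta_le_two n; rw [runPos_succ]; omega

lemma le_runPos (n : ℕ) : 2 * n ≤ runPos n := by
  induction n with
  | zero => simp [runPos]
  | succ n ih => rw [runPos_succ]; omega

lemma runPos_gap (a d : ℕ) : runPos (a + d) ≤ runPos a + 4 * d := by
  induction d with
  | zero => simp
  | succ d ih =>
    have h : a + (d + 1) = (a + d) + 1 := by omega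
    rw [h, runPos_succ]
    have := theta_le_two (a + d)
    omega

lemma tm_pow_sub_one_of_even (k : ℕ) (hk : k % 2 = 0) :
    thueMorse (2 ^ k - 1) = false := by
  rw [tm_eq, pop_pow_sub_one, hk]
  rfl

/-- every window of length 8 (aligned) contains a descent `10` of Thue-Morse -/
lemma exists_desc (j : ℕ) :
    ∃ m, 8 * j ≤ m ∧ m ≤ 8 * j + 2 ∧ thueMorse m = true ∧ thueMorse (m + 1) = false := by
  have h8 : (8 : ℕ) = 2 ^ 3 := rfl
  cases htj : thueMorse j with
  | false =>
    refine ⟨8 * j + 2, by omega, by omega, ?_, ?_⟩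
    · rw [h8, tm_block 3 j 2 (by norm_num), htj, tm2]; rfl
    · have : 8 * j + 2 + 1 = 2 ^ 3 * j + 3 := by omega
      rw [this, tm_block 3 j 3 (by norm_num), htj, tm3]; rfl
  | true =>
    refine ⟨8 * j, by omega, by omega, ?_, ?_⟩
    · have : 8 * j = 2 ^ 3 * j + 0 := by omega
      rw [this, tm_block 3 j 0 (by norm_num), htj, tm0]; rfl
    · rw [h8, tm_block 3 j 1 (by norm_num), htj, tm1]; rfl

/-- the key occurrence lemma: θ matches its own prefix at `2^k * (m+1)` whenever
`k` is even, `N ≤ 2^k`, and Thue-Morse has a descent at `m`. -/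
lemma theta_match (N k m : ℕ) (hk : N ≤ 2 ^ k) (hkeven : k % 2 = 0)
    (hm : thueMorse m = true) (hm1 : thueMorse (m + 1) = false) :
    ∀ i, i < N → theta (2 ^ k * (m + 1) + i) = theta i := by
  have he : 1 ≤ 2 ^ k := Nat.one_le_two_pow
  set e := 2 ^ k with hedef
  -- transfer of Thue-Morse values
  have hti : ∀ i, i < e → thueMorse (e * (m + 1) + i) = thueMorse i := by
    intro i hi
    rw [tm_block k (m + 1) i hi, hm1]
    simp
  -- value just before the block
  have htq1 : thueMorse (e * (m + 1) - 1) = true := by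
    have h1 : e * (m + 1) - 1 = e * m + (e - 1) := by
      have : e * (m + 1) = e * m + e := by ring
      omega
    rw [h1, tm_block k m (e - 1) (by omega), hm, tm_pow_sub_one_of_even k hkeven]
    rfl
  intro i hi
  cases i with
  | zero =>
    have hq1 : e * (m + 1) = (e * (m + 1) - 1) + 1 := by
      have : 0 < e * (m + 1) := Nat.mul_pos (by omega) (by omega)
      omega
    rw [Nat.add_zero, hq1, theta_succ, htq1]
    have h0 : thueMorse (e * (m + 1) - 1 + 1) = false := by
      rw [← hq1]
      have := hti 0 (by omega)
      rw [Nat.add_zero] at this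
      rw [this, tm0]
    rw [h0, theta_zero]
    simp
  | succ i =>
    have h1 : e * (m + 1) + (i + 1) = (e * (m + 1) + i) + 1 := by omega
    rw [h1, theta_succ, theta_succ, hti i (by omega)]
    have h2 : e * (m + 1) + i + 1 = e * (m + 1) + (i + 1) := by omega
    rw [h2, hti (i + 1) (by omega)]

lemma theta_recur (N : ℕ) :
    ∃ B, ∀ p, ∃ q, p ≤ runPos q ∧ runPos q ≤ p + B ∧
      ∀ i, i < N → theta (q + i) = theta i := by
  classical
  set k := 2 * (N + 1) with hkdef
  have hkeven : k % 2 = 0 := by omega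
  set e := 2 ^ k with hedef
  have he : 1 ≤ e := Nat.one_le_two_pow
  have hNe : N ≤ e := by
    calc N ≤ 2 * (N + 1) := by omega
    _ ≤ 2 ^ (2 * (N + 1)) := Nat.le_of_lt Nat.lt_two_pow_self
  -- chosen descents
  have hdesc := fun j => exists_desc j
  set m : ℕ → ℕ := fun j => (hdesc j).choose with hmdef
  have hm1 : ∀ j, 8 * j ≤ m j := fun j => (hdesc j).choose_spec.1
  have hm2 : ∀ j, m j ≤ 8 * j + 2 := fun j => (hdesc j).choose_spec.2.1
  have hm3 : ∀ j, thueMorse (m j) = true := fun j => (hdesc j).choose_spec.2.2.1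
  have hm4 : ∀ j, thueMorse (m j + 1) = false := fun j => (hdesc j).choose_spec.2.2.2
  refine ⟨60 * e, ?_⟩
  intro p
  have hex : ∃ j, p ≤ runPos (e * (m j + 1)) := by
    refine ⟨p, ?_⟩
    calc p ≤ 2 * (e * (8 * p + 1)) := by nlinarith
    _ ≤ 2 * (e * (m p + 1)) := by
        have := hm1 p
        have : e * (8 * p + 1) ≤ e * (m p + 1) := Nat.mul_le_mul_left _ (by omega)
        omega
    _ ≤ runPos (e * (m p + 1)) := le_runPos _
  set j₀ := Nat.find hex with hj0def
  have hfind : p ≤ runPos (e * (m j₀ + 1)) := Nat.find_spec hex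
  refine ⟨e * (m j₀ + 1), hfind, ?_, theta_match N k (m j₀) hNe hkeven (hm3 j₀) (hm4 j₀)⟩
  cases hj : j₀ with
  | zero =>
    have h0 : e * (m 0 + 1) ≤ e * 3 := Nat.mul_le_mul_left _ (by have := hm2 0; omega)
    have h1 : runPos (e * (m 0 + 1)) ≤ 4 * (e * (m 0 + 1)) := runPos_le _
    have h2 : e * 3 = 3 * e := by ring
    omega
  | succ j' =>
    have hlt : runPos (e * (m j' + 1)) < p := by
      have := Nat.find_min hex (m := j') (by omega)
      omega
    have hmle : m j' + 1 ≤ m (j' + 1) + 1 := by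
      have h1 := hm2 j'
      have h2 := hm1 (j' + 1)
      omega
    have hQle : e * (m j' + 1) ≤ e * (m (j' + 1) + 1) := Nat.mul_le_mul_left _ hmle
    have hdiff : e * (m (j' + 1) + 1) ≤ e * (m j' + 1) + 11 * e := by
      have h1 := hm2 (j' + 1)
      have h2 := hm1 j'
      have h3 : e * (m (j' + 1) + 1) ≤ e * (8 * j' + 11) := by
        refine Nat.mul_le_mul_left _ ?_
        omega
      have h4 : e * (8 * j' + 1) ≤ e * (m j' + 1) := Nat.mul_le_mul_left _ (by omega)
      have h5 : e * (8 * j' + 11) = e * (8 * j' + 1) + 10 * e := by ring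
      omega
    have hgap := runPos_gap (e * (m j' + 1)) (e * (m (j' + 1) + 1) - e * (m j' + 1))
    rw [Nat.add_sub_cancel' hQle] at hgap
    omega


lemma alpha_false_iff (m : ℕ) : alpha m = false ↔ ∃ n, m + 1 = runPos (n + 1) := by
  by_cases h : ∃ n, m + 1 = runPos (n + 1) <;> simp [alpha, h]

lemma runPos_add_of_match (q N : ℕ) (hθ : ∀ i, i < N → theta (q + i) = theta i) :
    ∀ i, i ≤ N → runPos (q + i) = runPos q + runPos i := by
  intro i hi
  induction i with
  | zero => simp [runPos]
  | succ i ih =>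
    have h1 : q + (i + 1) = (q + i) + 1 := by omega
    rw [h1, runPos_succ, ih (by omega), hθ i (by omega), runPos_succ]
    omega

lemma alpha_match (q N : ℕ) (hθ : ∀ i, i < N → theta (q + i) = theta i) :
    ∀ m, m < runPos N → alpha (runPos q + m) = alpha m := by
  intro m hm
  have hadd := runPos_add_of_match q N hθ
  have key : (∃ n, runPos q + m + 1 = runPos (n + 1)) ↔ (∃ n, m + 1 = runPos (n + 1)) := by
    constructor
    · rintro ⟨n, hn⟩
      have h1 : runPos q < runPos (n + 1) := by omega
      have h2 : q < n + 1 := by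
        by_contra hc
        exact absurd (runPos_strictMono.le_iff_le.mpr (by omega : n + 1 ≤ q)) (by omega)
      have h3 : runPos (n + 1) ≤ runPos (q + N) := by
        rw [hadd N (le_refl N)]
        omega
      have h4 : n + 1 ≤ q + N := runPos_strictMono.le_iff_le.mp h3
      obtain ⟨l, hl⟩ : ∃ l, n + 1 = q + (l + 1) := ⟨n - q, by omega⟩
      refine ⟨l, ?_⟩
      have h5 : runPos (q + (l + 1)) = runPos q + runPos (l + 1) :=
        hadd (l + 1) (by omega)
      rw [hl, h5] at hn
      omega
    · rintro ⟨n, hn⟩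
      have h1 : n + 1 ≤ N := by
        by_contra hc
        have : runPos N < runPos (n + 1) := runPos_strictMono (by omega)
        omega
      refine ⟨q + n, ?_⟩
      have h2 : q + n + 1 = q + (n + 1) := by omega
      rw [h2, hadd (n + 1) h1]
      omega
  by_cases h : ∃ n, m + 1 = runPos (n + 1)
  · simp [alpha, h, key.mpr h]
  · simp only [alpha]
    rw [if_neg h, if_neg (fun hc => h (key.mp hc))]

lemma alpha_recur (N : ℕ) :
    ∃ B, ∀ p, ∃ j, j ≤ B ∧ ∀ i, i < N → alpha (p + j + i) = alpha i := by
  obtain ⟨B, hB⟩ := theta_recur N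
  refine ⟨B, fun p => ?_⟩
  obtain ⟨q, h1, h2, h3⟩ := hB p
  refine ⟨runPos q - p, by omega, fun i hi => ?_⟩
  have h4 : p + (runPos q - p) + i = runPos q + i := by omega
  rw [h4]
  exact alpha_match q N h3 i (by have := le_runPos N; omega)


lemma theta_cases (n : ℕ) :
    (theta (n + 1) = 2 ∧ thueMorse (n + 1) = thueMorse n) ∨
    (theta (n + 1) = 1 ∧ thueMorse (n + 1) = true) ∨
    (theta (n + 1) = 0 ∧ thueMorse (n + 1) = false) := by
  by_cases h : thueMorse n = thueMorse (n + 1)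
  · exact Or.inl ⟨by rw [theta_succ, if_pos h], h.symm⟩
  · cases h2 : thueMorse (n + 1) with
    | true =>
      refine Or.inr (Or.inl ⟨?_, rfl⟩)
      rw [theta_succ, if_neg h, h2]
      rfl
    | false =>
      refine Or.inr (Or.inr ⟨?_, rfl⟩)
      rw [theta_succ, if_neg h, h2]
      rfl

/-- θ eventually periodic implies False. -/
lemma theta_not_eventually_periodic (d M : ℕ) (hd : 1 ≤ d)
    (h : ∀ m, M ≤ m → theta (m + d) = theta m) : False := by
  by_cases hA : ∀ m, M + 1 ≤ m → theta m = 2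
  · -- Thue-Morse eventually constant
    refine tm_not_eventually_periodic 1 (M + 1) (by omega) ?_
    intro n hn
    have h2 := hA (n + 1) (by omega)
    rcases theta_cases n with ⟨_, h3⟩ | ⟨h3, _⟩ | ⟨h3, _⟩
    · exact h3
    · omega
    · omega
  · push_neg at hA
    obtain ⟨n1, hn1M, hn1⟩ := hA
    obtain ⟨c, hc⟩ : ∃ c, n1 = c + 1 := ⟨n1 - 1, by omega⟩
    -- base : thueMorse (n1 + d) = thueMorse n1
    have hper : ∀ a, M ≤ a + 1 → theta (a + 1 + d) = theta (a + 1) := by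
      intro a ha
      have := h (a + 1) ha
      rwa [show a + 1 + d = a + d + 1 from by omega] at this ⊢
    have base : thueMorse (n1 + d) = thueMorse n1 := by
      rw [hc] at hn1 ⊢
      have heq : theta (c + d + 1) = theta (c + 1) := by
        have := hper c (by omega)
        rwa [show c + 1 + d = c + d + 1 from by omega] at this
      rcases theta_cases c with ⟨h1, _⟩ | ⟨h1, h2⟩ | ⟨h1, h2⟩
      · omega
      · rcases theta_cases (c + d) with ⟨h3, _⟩ | ⟨h3, h4⟩ | ⟨h3, h4⟩ <;>
          first
          | omega
          | (rw [show c + 1 + d = c + d + 1 from by omega, h4, h2])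
      · rcases theta_cases (c + d) with ⟨h3, _⟩ | ⟨h3, h4⟩ | ⟨h3, h4⟩ <;>
          first
          | omega
          | (rw [show c + 1 + d = c + d + 1 from by omega, h4, h2])
    -- induction
    have step : ∀ i, thueMorse (n1 + i + d) = thueMorse (n1 + i) := by
      intro i
      induction i with
      | zero => simpa using base
      | succ i ih =>
        have heq : theta (n1 + i + 1 + d) = theta (n1 + i + 1) :=
          hper (n1 + i) (by omega)
        rw [show n1 + i + 1 + d = n1 + i + d + 1 from by omega] at heq
        rw [show n1 + (i + 1) + d = n1 + i + d + 1 from by omega,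
            show n1 + (i + 1) = n1 + i + 1 from by omega]
        rcases theta_cases (n1 + i) with ⟨h1, h2⟩ | ⟨h1, h2⟩ | ⟨h1, h2⟩ <;>
        rcases theta_cases (n1 + i + d) with ⟨h3, h4⟩ | ⟨h3, h4⟩ | ⟨h3, h4⟩ <;>
          first
          | omega
          | (rw [h4, h2]; exact ih)
          | (rw [h4, h2])
    exact tm_not_eventually_periodic d n1 hd
      (fun n hn => by
        have := step (n - n1)
        rwa [show n1 + (n - n1) = n from by omega] at this)


lemma alpha_not_eventually_periodic (p K : ℕ) (hp : 1 ≤ p)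
    (h : ∀ n, K ≤ n → alpha (n + p) = alpha n) : False := by
  classical
  -- the zero of α in block n is at position runPos (n+1) - 1 ≥ n
  have hzero : ∀ n, alpha (runPos (n + 1) - 1) = false := by
    intro n
    rw [alpha_false_iff]
    have h2 : 2 * (n + 1) ≤ runPos (n + 1) := le_runPos (n + 1)
    exact ⟨n, by omega⟩
  have hzpos : ∀ n, K ≤ n → K ≤ runPos (n + 1) - 1 := by
    intro n hn
    have := le_runPos (n + 1)
    omega
  -- existence of the shifted zero
  have hex : ∀ n, K ≤ n → ∃ n', runPos (n + 1) + p = runPos (n' + 1) := by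
    intro n hn
    have h1 : alpha ((runPos (n + 1) - 1) + p) = false := by
      rw [h _ (hzpos n hn)]
      exact hzero n
    rw [alpha_false_iff] at h1
    obtain ⟨n', hn'⟩ := h1
    have h2 : 2 * (n + 1) ≤ runPos (n + 1) := le_runPos (n + 1)
    exact ⟨n', by omega⟩
  -- the induced index shift
  set f : ℕ → ℕ := fun n => if hn : ∃ n', runPos (n + 1) + p = runPos (n' + 1)
    then hn.choose else 0 with hfdef
  have hf : ∀ n, K ≤ n → runPos (f n + 1) = runPos (n + 1) + p := by
    intro n hn
    have hx := hex n hn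
    simp only [hfdef, dif_pos hx]
    exact hx.choose_spec.symm
  have hfgt : ∀ n, K ≤ n → n < f n := by
    intro n hn
    have h1 := hf n hn
    by_contra hc
    have : runPos (f n + 1) ≤ runPos (n + 1) :=
      runPos_strictMono.le_iff_le.mpr (by omega)
    omega
  -- the index shift is a shift by a constant
  have hstep : ∀ n, K ≤ n → f (n + 1) = f n + 1 := by
    intro n hn
    have h1 := hf n hn
    have h2 := hf (n + 1) (by omega)
    have hge : f n + 1 ≤ f (n + 1) := by
      have : runPos (f n + 1) < runPos (f (n + 1) + 1) := by
        rw [h1, h2]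
        have : runPos (n + 1) < runPos (n + 1 + 1) := runPos_strictMono (by omega)
        omega
      have := runPos_strictMono.lt_iff_lt.mp this
      omega
    by_contra hc
    have hge2 : f n + 2 ≤ f (n + 1) := by omega
    -- the zero at runPos (f n + 2) - 1 pulls back
    set m := runPos (f n + 2) - 1 with hm
    have hrf2 : runPos (f n + 1) < runPos (f n + 2) := runPos_strictMono (by omega)
    have hmK : K + p ≤ m := by
      have h3 := le_runPos (n + 1)
      have : K ≤ n + 1 := by omega
      omega
    have hμ : alpha (m - p) = false := by
      have h4 : alpha ((m - p) + p) = alpha (m - p) := h (m - p) (by omega)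
      rw [show m - p + p = m from by omega] at h4
      rw [← h4, hm]
      exact hzero (f n + 1)
    rw [alpha_false_iff] at hμ
    obtain ⟨b, hb⟩ := hμ
    -- runPos (n+1) < runPos (b+1) < runPos (n+2)
    have hb1 : runPos (b + 1) = runPos (f n + 2) - p := by omega
    have hlow : runPos (n + 1) < runPos (b + 1) := by omega
    have hhigh : runPos (b + 1) < runPos (n + 1 + 1) := by
      have h5 : runPos (f n + 2) < runPos (f (n + 1) + 1) :=
        runPos_strictMono (by omega)
      omega
    have hlow' : n + 1 < b + 1 := runPos_strictMono.lt_iff_lt.mp hlow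
    have hhigh' : b + 1 < n + 1 + 1 := runPos_strictMono.lt_iff_lt.mp hhigh
    omega
  -- hence f n = n + d for n ≥ K
  set d := f K - K with hd
  have hd1 : 1 ≤ d := by
    have := hfgt K (le_refl K)
    omega
  have hfn : ∀ i, f (K + i) = K + i + d := by
    intro i
    induction i with
    | zero =>
      simp only [Nat.add_zero]
      have := hfgt K (le_refl K)
      omega
    | succ i ih =>
      have := hstep (K + i) (by omega)
      rw [show K + (i + 1) = K + i + 1 from by omega]
      omega
  -- θ is eventually periodic
  refine theta_not_eventually_periodic d (K + 1) hd1 ?_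
  intro m hm
  obtain ⟨i, hi⟩ : ∃ i, m = K + i + 1 := ⟨m - K - 1, by omega⟩
  have e1 : runPos (f (K + i) + 1) = runPos (K + i + 1) + p := hf (K + i) (by omega)
  have e2 : runPos (f (K + i + 1) + 1) = runPos (K + i + 1 + 1) + p :=
    hf (K + i + 1) (by omega)
  rw [hfn i] at e1
  rw [show K + i + 1 = K + (i + 1) from by omega, hfn (i + 1)] at e2
  rw [show K + (i + 1) + 1 = K + i + 1 + 1 from by omega] at e2
  have s1 : runPos (K + i + d + 1 + 1) = runPos (K + i + d + 1) + theta (K + i + d + 1) + 2 :=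
    runPos_succ _
  have s2 : runPos (K + i + 1 + 1) = runPos (K + i + 1) + theta (K + i + 1) + 2 :=
    runPos_succ _
  rw [show K + (i + 1) + d + 1 = K + i + d + 1 + 1 from by omega] at e2
  rw [hi, show K + i + 1 + d = K + i + d + 1 from by omega]
  omega


lemma shift_iterate_apply (k : ℕ) (x : ℕ → Bool) (n : ℕ) :
    (shift^[k] x) n = x (n + k) := by
  induction k generalizing x with
  | zero => rfl
  | succ k ih =>
    rw [Function.iterate_succ_apply, ih]
    show x (n + k + 1) = x (n + (k + 1))
    rw [Nat.add_assoc]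

lemma continuous_shift : Continuous shift :=
  continuous_pi (fun n => continuous_apply (n + 1))

lemma mem_closure_iff_agree (x : ℕ → Bool) (S : Set (ℕ → Bool)) :
    x ∈ closure S ↔ ∀ N, ∃ s ∈ S, ∀ i, i < N → s i = x i := by
  constructor
  · intro h N
    set V : Set (ℕ → Bool) := ⋂ i ∈ Finset.range N, (fun z : ℕ → Bool => z i) ⁻¹' {x i}
      with hV
    have hVopen : IsOpen V :=
      isOpen_biInter_finset fun i _ =>
        (continuous_apply i).isOpen_preimage _ (isOpen_discrete _)
    have hxV : x ∈ V := by simp [hV]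
    obtain ⟨z, hz⟩ := _root_.mem_closure_iff.mp h V hVopen hxV
    refine ⟨z, hz.2, fun i hi => ?_⟩
    have := Set.mem_iInter₂.mp hz.1 i (Finset.mem_range.mpr hi)
    simpa using this
  · intro h
    choose g hgS hgagree using h
    have htend : Filter.Tendsto g Filter.atTop (nhds x) := by
      rw [tendsto_pi_nhds]
      intro i
      refine Filter.Tendsto.congr' ?_ tendsto_const_nhds
      filter_upwards [Filter.eventually_ge_atTop (i + 1)] with N hN
      exact (hgagree N i (by omega)).symm
    exact mem_closure_of_tendsto htend (Filter.Eventually.of_forall hgS)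

/-- `α` is a Morse-type minimal point: its orbit closure under the shift map
is minimal and uncountable. -/
theorem alpha_morseTypeMinimal :
    (∀ K : Set (ℕ → Bool),
        K ⊆ closure {y : ℕ → Bool | ∃ k : ℕ, shift^[k] alpha = y} →
        K.Nonempty → IsClosed K → shift '' K ⊆ K →
        K = closure {y : ℕ → Bool | ∃ k : ℕ, shift^[k] alpha = y}) ∧
    ¬ (closure {y : ℕ → Bool | ∃ k : ℕ, shift^[k] alpha = y}).Countable := by
  set Orb : Set (ℕ → Bool) := {y | ∃ k, shift^[k] alpha = y} with hOrb
  have hmin : ∀ K : Set (ℕ → Bool), K ⊆ closure Orb → K.Nonempty → IsClosed K →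
      shift '' K ⊆ K → K = closure Orb := by
    intro K hKsub hKne hKcl hKinv
    obtain ⟨y, hy⟩ := hKne
    have horb : ∀ j, shift^[j] y ∈ K := by
      intro j
      induction j with
      | zero => exact hy
      | succ j ih =>
        rw [Function.iterate_succ_apply']
        exact hKinv ⟨_, ih, rfl⟩
    have halphaK : alpha ∈ K := by
      have hsub : {z | ∃ j, shift^[j] y = z} ⊆ K := by
        rintro z ⟨j, rfl⟩
        exact horb j
      refine hKcl.closure_subset_iff.mpr hsub ?_
      rw [mem_closure_iff_agree]
      intro N
      obtain ⟨B, hB⟩ := alpha_recur N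
      have hyX : y ∈ closure Orb := hKsub hy
      rw [mem_closure_iff_agree] at hyX
      obtain ⟨s, hsOrb, hsag⟩ := hyX (B + N)
      obtain ⟨m, hm⟩ := hsOrb
      obtain ⟨j, hjB, hj⟩ := hB m
      refine ⟨shift^[j] y, ⟨j, rfl⟩, fun i hi => ?_⟩
      rw [shift_iterate_apply]
      have h1 : s (i + j) = y (i + j) := hsag (i + j) (by omega)
      have h2 : s (i + j) = alpha (i + j + m) := by
        rw [← hm, shift_iterate_apply]
      have h3 : alpha (m + j + i) = alpha i := hj i hi
      rw [← h1, h2, show i + j + m = m + j + i from by omega, h3]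
    have hOrbK : Orb ⊆ K := by
      rintro z ⟨k, rfl⟩
      induction k with
      | zero => exact halphaK
      | succ k ih =>
        rw [Function.iterate_succ_apply']
        exact hKinv ⟨_, ih, rfl⟩
    exact le_antisymm hKsub (hKcl.closure_subset_iff.mpr hOrbK)
  refine ⟨hmin, ?_⟩
  intro hc
  have hXne : alpha ∈ closure Orb := subset_closure ⟨0, rfl⟩
  haveI : Nonempty ↥(closure Orb) := ⟨⟨alpha, hXne⟩⟩
  haveI : Countable ↥(closure Orb) := hc.to_subtype
  haveI : CompactSpace ↥(closure Orb) :=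
    isCompact_iff_compactSpace.mp isClosed_closure.isCompact
  haveI : BaireSpace ↥(closure Orb) := BaireSpace.of_t2Space_locallyCompactSpace
  obtain ⟨x0, hx0⟩ := nonempty_interior_of_iUnion_of_closed
      (f := fun x : ↥(closure Orb) => ({x} : Set ↥(closure Orb)))
      (fun x => isClosed_singleton) (Set.iUnion_of_singleton _)
  have hopen : IsOpen ({x0} : Set ↥(closure Orb)) := by
    have h1 : interior ({x0} : Set ↥(closure Orb)) = {x0} := by
      refine Set.Subset.antisymm interior_subset ?_
      obtain ⟨z, hz⟩ := hx0
      have hz2 : z = x0 := Set.mem_singleton_iff.mp (interior_subset hz)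
      have hx0i : x0 ∈ interior ({x0} : Set ↥(closure Orb)) := hz2 ▸ hz
      exact Set.singleton_subset_iff.mpr hx0i
    rw [← h1]
    exact isOpen_interior
  obtain ⟨U, hUopen, hUeq⟩ := isOpen_induced_iff.mp hopen
  have hUX : U ∩ closure Orb = {(x0 : ℕ → Bool)} := by
    ext w
    constructor
    · rintro ⟨hwU, hwX⟩
      have : (⟨w, hwX⟩ : ↥(closure Orb)) ∈ Subtype.val ⁻¹' U := hwU
      rw [hUeq] at this
      rw [Set.mem_singleton_iff] at this ⊢
      exact congrArg Subtype.val this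
    · intro hw
      rw [Set.mem_singleton_iff] at hw
      subst hw
      refine ⟨?_, x0.2⟩
      have : x0 ∈ ({x0} : Set ↥(closure Orb)) := rfl
      rw [← hUeq] at this
      exact this
  have hx0U : (x0 : ℕ → Bool) ∈ U := by
    have : x0 ∈ ({x0} : Set ↥(closure Orb)) := rfl
    rw [← hUeq] at this
    exact this
  obtain ⟨z, hzU, hzOrb⟩ := _root_.mem_closure_iff.mp x0.2 U hUopen hx0U
  obtain ⟨k, hk⟩ := hzOrb
  have hzx : z = (x0 : ℕ → Bool) := by
    have : z ∈ U ∩ closure Orb := ⟨hzU, subset_closure ⟨k, hk⟩⟩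
    rwa [hUX, Set.mem_singleton_iff] at this
  set T : Set (ℕ → Bool) := {w | ∃ m, shift^[k + 1 + m] alpha = w} with hT
  have hTX : closure T = closure Orb := by
    refine hmin (closure T) ?_ ⟨shift^[k + 1] alpha, subset_closure ⟨0, by rw [Nat.add_zero]⟩⟩
      isClosed_closure ?_
    · refine closure_mono ?_
      rintro w ⟨m, rfl⟩
      exact ⟨k + 1 + m, rfl⟩
    · refine (image_closure_subset_closure_image continuous_shift).trans (closure_mono ?_)
      rintro w ⟨w', ⟨m, rfl⟩, rfl⟩
      refine ⟨m + 1, ?_⟩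
      rw [show k + 1 + (m + 1) = (k + 1 + m) + 1 from by omega,
        Function.iterate_succ_apply']
  have hx0T : (x0 : ℕ → Bool) ∈ closure T := by
    rw [hTX]
    exact x0.2
  obtain ⟨w, hwU, hwT⟩ := _root_.mem_closure_iff.mp hx0T U hUopen hx0U
  obtain ⟨m, hw⟩ := hwT
  have hwx : w = (x0 : ℕ → Bool) := by
    have hwX : w ∈ closure Orb := by
      rw [← hTX]
      exact subset_closure ⟨m, hw⟩
    have : w ∈ U ∩ closure Orb := ⟨hwU, hwX⟩
    rwa [hUX, Set.mem_singleton_iff] at this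
  have hkey : ∀ n, alpha (n + (k + 1 + m)) = alpha (n + k) := by
    intro n
    have e1 : alpha (n + (k + 1 + m)) = (shift^[k + 1 + m] alpha) n :=
      (shift_iterate_apply _ _ _).symm
    have e2 : alpha (n + k) = (shift^[k] alpha) n := (shift_iterate_apply _ _ _).symm
    rw [e1, e2, hk, hw, hzx, hwx]
  refine alpha_not_eventually_periodic (m + 1) k (by omega) ?_
  intro n hn
  have := hkey (n - k)
  rw [show n - k + (k + 1 + m) = n + (m + 1) from by omega,
    show n - k + k = n from by omega] at this
  exact this
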